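/- In the 3-approval exact control by adding voters construction from 3DM: given pairwise disjoint sets X, Y, Z of size k and M ⊆ X × Y × Z, form the election with candidates {p, d₁, d₂} ∪ X ∪ Y ∪ Z, one registered voter approving {p, d₁, d₂}, and for each triple (x,y,z) ∈ M one unregistered voter approving {x, y, z}. Then p can be made a 3-approval winner by adding exactly k unregistered voters if and only if M contains a perfect matching of size k. -/

import Mathlib

/-- The ground set of a 3DM instance with `|X| = |Y| = |Z| = k`, the three
summands representing `X`, `Y`, `Z` (pairwise disjoint by construction). -/
abbrev Elem (k : ℕ) := Fin k ⊕ Fin k ⊕ Fin k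

/-- Candidates for the 3-approval exact control by adding voters
construction: `none` is the preferred candidate `p`, `some (inl a)` is the
candidate for ground element `a`, and `some (inr 0)`, `some (inr 1)` are the
dummy candidates `d₁`, `d₂`. -/
abbrev Cand3 (k : ℕ) := Option (Elem k ⊕ Fin 2)

/-- A vote is modeled by its set of (three) approved candidates. -/
def tripleVote3 {k : ℕ} (t : Fin k × Fin k × Fin k) : Finset (Cand3 k) :=
  {some (Sum.inl (Sum.inl t.1)), some (Sum.inl (Sum.inr (Sum.inl t.2.1))),
    some (Sum.inl (Sum.inr (Sum.inr t.2.2)))}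

/-- The single registered voter approves `{p, d₁, d₂}`. -/
def registered3 (k : ℕ) : Multiset (Finset (Cand3 k)) :=
  {({none, some (Sum.inr 0), some (Sum.inr 1)} : Finset (Cand3 k))}

/-- The unregistered voters: one voter approving `{x, y, z}` for each triple
`(x, y, z) ∈ M`. -/
def unregistered3 {k : ℕ} (M : Finset (Fin k × Fin k × Fin k)) :
    Multiset (Finset (Cand3 k)) :=
  M.val.map tripleVote3

/-- The 3-approval score of a candidate. -/
def appScore3 {k : ℕ} (V : Multiset (Finset (Cand3 k))) (c : Cand3 k) : ℕ :=
  @Multiset.countP _ (fun s => c ∈ s) (fun s => Finset.decidableMem c s) V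

/-- `M` contains a perfect matching of size `k`: a subset `M' ⊆ M` of size
`k` covering each ground element exactly once. -/
def matching3 {k : ℕ} (M : Finset (Fin k × Fin k × Fin k)) : Prop :=
  ∃ M' ⊆ M, M'.card = k ∧
    (∀ i : Fin k, (M'.filter (fun t => t.1 = i)).card = 1) ∧
    (∀ i : Fin k, (M'.filter (fun t => t.2.1 = i)).card = 1) ∧
    (∀ i : Fin k, (M'.filter (fun t => t.2.2 = i)).card = 1)


lemma score_none {k} (T : Multiset (Fin k × Fin k × Fin k)) :
    appScore3 (registered3 k + T.map tripleVote3) none = 1 := by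
  simp [appScore3, registered3, Multiset.countP_add, Multiset.countP_map, tripleVote3,
    Multiset.filter_eq_nil]

lemma score_dummy {k} (T : Multiset (Fin k × Fin k × Fin k)) (j : Fin 2) :
    appScore3 (registered3 k + T.map tripleVote3) (some (Sum.inr j)) = 1 := by
  fin_cases j <;>
  simp [appScore3, registered3, Multiset.countP_add, Multiset.countP_map, tripleVote3,
    Multiset.filter_eq_nil]

lemma score_x {k} (T : Multiset (Fin k × Fin k × Fin k)) (i : Fin k) :
    appScore3 (registered3 k + T.map tripleVote3) (some (Sum.inl (Sum.inl i))) =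
      Multiset.card (T.filter (fun t => t.1 = i)) := by
  simp [appScore3, registered3, Multiset.countP_add, Multiset.countP_map, tripleVote3, eq_comm]

lemma score_y {k} (T : Multiset (Fin k × Fin k × Fin k)) (i : Fin k) :
    appScore3 (registered3 k + T.map tripleVote3) (some (Sum.inl (Sum.inr (Sum.inl i)))) =
      Multiset.card (T.filter (fun t => t.2.1 = i)) := by
  simp [appScore3, registered3, Multiset.countP_add, Multiset.countP_map, tripleVote3, eq_comm]

lemma score_z {k} (T : Multiset (Fin k × Fin k × Fin k)) (i : Fin k) :
    appScore3 (registered3 k + T.map tripleVote3) (some (Sum.inl (Sum.inr (Sum.inr i)))) =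
      Multiset.card (T.filter (fun t => t.2.2 = i)) := by
  simp [appScore3, registered3, Multiset.countP_add, Multiset.countP_map, tripleVote3, eq_comm]

lemma tv_inj {k} : Function.Injective (tripleVote3 (k := k)) := by
  intro a b h
  have hx : some (Sum.inl (Sum.inl a.1)) ∈ tripleVote3 b := by
    rw [← h]; simp [tripleVote3]
  have hy : some (Sum.inl (Sum.inr (Sum.inl a.2.1))) ∈ tripleVote3 b := by
    rw [← h]; simp [tripleVote3]
  have hz : some (Sum.inl (Sum.inr (Sum.inr a.2.2))) ∈ tripleVote3 b := by
    rw [← h]; simp [tripleVote3]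
  simp [tripleVote3] at hx hy hz
  obtain ⟨a1, a2, a3⟩ := a; obtain ⟨b1, b2, b3⟩ := b
  simp_all

lemma exists_map_pre {α β : Type*} [DecidableEq α] [DecidableEq β] {f : α → β}
    (hf : Function.Injective f) :
    ∀ (S : Multiset β) {m : Multiset α}, S ≤ m.map f → ∃ s ≤ m, S = s.map f := by
  intro S
  induction S using Multiset.induction_on with
  | empty => exact fun _ => ⟨0, Multiset.zero_le _, rfl⟩
  | cons b S ih =>
    intro m h
    have hb : b ∈ m.map f := Multiset.mem_of_le h (Multiset.mem_cons_self _ _)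
    obtain ⟨a, ha, rfl⟩ := Multiset.mem_map.mp hb
    have h2 : f a ::ₘ S ≤ f a ::ₘ (m.map f).erase (f a) := by
      rwa [Multiset.cons_erase hb]
    rw [Multiset.cons_le_cons_iff, ← Multiset.map_erase f hf a m] at h2
    obtain ⟨s, hs, rfl⟩ := ih h2
    refine ⟨a ::ₘ s, ?_, by simp⟩
    rw [← Multiset.cons_erase ha]
    exact Multiset.cons_le_cons _ hs

/-- In the 3-approval exact control by adding voters
construction from 3DM, `p = none` can be made a 3-approval winner by adding
exactly `k` unregistered voters iff `M` contains a perfect matching of size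
`k`. -/
theorem stmt_3 (k : ℕ) (M : Finset (Fin k × Fin k × Fin k)) :
    (∃ S ≤ unregistered3 M, Multiset.card S = k ∧
        ∀ c : Cand3 k,
          appScore3 (registered3 k + S) c ≤ appScore3 (registered3 k + S) none)
      ↔ matching3 M := by
  constructor
  · rintro ⟨S, hS, hcard, hwin⟩
    obtain ⟨s, hsm, rfl⟩ := exists_map_pre tv_inj S hS
    have hnod : s.Nodup := Multiset.nodup_of_le hsm M.nodup
    set M' : Finset (Fin k × Fin k × Fin k) := ⟨s, hnod⟩ with hM'
    have hsub : M' ⊆ M := Finset.val_le_iff.mp hsm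
    have hk : M'.card = k := by exact (by simpa using hcard : Multiset.card s = k)
    have hbx : ∀ i, (M'.filter (fun t => t.1 = i)).card ≤ 1 := fun i => by
      have := hwin (some (Sum.inl (Sum.inl i)))
      rwa [score_x, score_none] at this
    have hby : ∀ i, (M'.filter (fun t => t.2.1 = i)).card ≤ 1 := fun i => by
      have := hwin (some (Sum.inl (Sum.inr (Sum.inl i))))
      rwa [score_y, score_none] at this
    have hbz : ∀ i, (M'.filter (fun t => t.2.2 = i)).card ≤ 1 := fun i => by
      have := hwin (some (Sum.inl (Sum.inr (Sum.inr i))))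
      rwa [score_z, score_none] at this
    have key : ∀ (f : Fin k × Fin k × Fin k → Fin k),
        (∀ i, (M'.filter (fun t => f t = i)).card ≤ 1) →
        ∀ i, (M'.filter (fun t => f t = i)).card = 1 := by
      intro f hb i
      have hsum : ∑ j : Fin k, (M'.filter (fun t => f t = j)).card = k := by
        exact (Finset.card_eq_sum_card_fiberwise
          (fun t _ => Finset.mem_univ (f t))).symm.trans hk
      have := (Finset.sum_eq_sum_iff_of_le (g := fun _ => 1)
        (fun j _ => hb j)).mp (by rw [hsum]; simp)
      exact this i (Finset.mem_univ i)
    exact ⟨M', hsub, hk, key _ hbx, key _ hby, key _ hbz⟩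
  · rintro ⟨M', hsub, hk, hx, hy, hz⟩
    refine ⟨M'.val.map tripleVote3, Multiset.map_le_map (Finset.val_le_iff.mpr hsub),
      by simp [hk], ?_⟩
    intro c
    rw [score_none]
    match c with
    | none => rw [score_none]
    | some (Sum.inr j) => rw [score_dummy]
    | some (Sum.inl (Sum.inl i)) => rw [score_x]; exact le_of_eq (hx i)
    | some (Sum.inl (Sum.inr (Sum.inl i))) => rw [score_y]; exact le_of_eq (hy i)
    | some (Sum.inl (Sum.inr (Sum.inr i))) => rw [score_z]; exact le_of_eq (hz i)
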